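/- Let A be a commutative Artinian local ring with maximal ideal m and residue field κ = A/m, let (d^{i−1}, d^i) be a complex of free modules over A with middle rank l, and let a, b ≥ 1 be integers. Assume I_a(d^{i−1}) = 0, I_b(d^i) = 0, I_{a−1}(d^{i−1}⊗κ) ≠ 0 and I_{b−1}(d^i⊗κ) ≠ 0. Then im(d^{i−1}) and im(d^i) are free A-modules of ranks a−1 and b−1 respectively, and the i-th cohomology H^i is a free A-module of rank l − a − b + 2. -/

import Mathlib

/-- The determinantal ideal `I_m(M)`: the ideal generated by the `m × m` minors of `M`,
with the convention `I_m(M) = ⊤` for `m ≤ 0`; it is automatically `0` when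
`m` exceeds the number of rows or columns of `M`. -/
def detIdeal {A : Type*} [CommRing A] {I J : Type*} (M : Matrix I J A) (m : ℤ) : Ideal A :=
  if m ≤ 0 then ⊤
  else Ideal.span {x | ∃ (r : Fin m.toNat → I) (c : Fin m.toNat → J),
    Function.Injective r ∧ Function.Injective c ∧ x = (M.submatrix r c).det}

/-- The `i`-th cohomology jump ideal `J^i_k = ⋂_{(a,b), a+b = l-k+2} (I_a(d¹) + I_b(d²))`
of a complex `A^{l´} → A^l → A^{l´´}` with middle rank `l`, parametrized by `b = l-k+2-a`. -/
def jumpIdeal {A : Type*} [CommRing A] {l l1 l2 : ℕ}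
    (d1 : Matrix (Fin l) (Fin l1) A) (d2 : Matrix (Fin l2) (Fin l) A) (k : ℤ) : Ideal A :=
  ⨅ a : ℤ, detIdeal d1 a + detIdeal d2 ((l : ℤ) - k + 2 - a)

/-- The middle cohomology `H^i = ker(d²) / im(d¹)` of the complex
`A^{l´} → A^l → A^{l´´}` given by the matrices `d1`, `d2`. -/
abbrev midCohomology {A : Type*} [CommRing A] {l l1 l2 : ℕ}
    (d1 : Matrix (Fin l) (Fin l1) A) (d2 : Matrix (Fin l2) (Fin l) A) :=
  LinearMap.ker d2.mulVecLin ⧸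
    (LinearMap.range d1.mulVecLin).comap (LinearMap.ker d2.mulVecLin).subtype

section Aux
variable {A : Type*} [CommRing A]

lemma det_submatrix_zero_rows {p q m : Type*} [DecidableEq m] [Fintype m]
    (M : Matrix p q A) (r : m → p) (c : m → q) (h : ¬ Function.Injective r) :
    (M.submatrix r c).det = 0 := by
  rw [Function.not_injective_iff] at h
  obtain ⟨i, j, hij, hne⟩ := h
  exact Matrix.det_zero_of_row_eq hne (funext fun k => by simp [hij])

lemma det_submatrix_zero_cols {p q m : Type*} [DecidableEq m] [Fintype m]
    (M : Matrix p q A) (r : m → p) (c : m → q) (h : ¬ Function.Injective c) :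
    (M.submatrix r c).det = 0 := by
  rw [Function.not_injective_iff] at h
  obtain ⟨i, j, hij, hne⟩ := h
  exact Matrix.det_zero_of_column_eq hne (fun k => by simp [hij])

lemma minors_eq_zero {p q : Type*} {M : Matrix p q A} {a : ℕ} (ha : 1 ≤ a)
    (h : detIdeal M (a : ℤ) = ⊥) (r' : Fin a → p) (c' : Fin a → q) :
    (M.submatrix r' c').det = 0 := by
  by_cases hr : Function.Injective r'
  · by_cases hc : Function.Injective c'
    · rw [detIdeal, if_neg (by omega), Ideal.span_eq_bot] at h
      exact h _ ⟨r', c', hr, hc, rfl⟩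
    · exact det_submatrix_zero_cols M r' c' hc
  · exact det_submatrix_zero_rows M r' c' hr

lemma exists_unit_minor [IsLocalRing A] {p q : Type*} {M : Matrix p q A} {a : ℕ} (ha : 1 ≤ a)
    (h : detIdeal (M.map (IsLocalRing.residue A)) ((a : ℤ) - 1) ≠ ⊥) :
    ∃ (s : Fin (a - 1) → p) (t : Fin (a - 1) → q), Function.Injective s ∧
      Function.Injective t ∧ IsUnit (M.submatrix s t).det := by
  rcases eq_or_lt_of_le ha with h1 | h1
  · obtain rfl : a = 1 := h1.symm
    exact ⟨Fin.elim0, Fin.elim0, fun x => x.elim0, fun x => x.elim0,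
      by rw [Matrix.det_fin_zero]; exact isUnit_one⟩
  · have h2 : ((a : ℤ) - 1) = ((a - 1 : ℕ) : ℤ) := by omega
    rw [h2, detIdeal, if_neg (by omega)] at h
    have := mt Ideal.span_eq_bot.mpr h
    push_neg at this
    obtain ⟨x, ⟨s, t, hs, ht, rfl⟩, hx⟩ := this
    refine ⟨s, t, hs, ht, ?_⟩
    by_contra hu
    have hmem : (M.submatrix s t).det ∈ IsLocalRing.maximalIdeal A :=
      (IsLocalRing.mem_maximalIdeal _).mpr hu
    have : (IsLocalRing.residue A) (M.submatrix s t).det = 0 :=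
      (Ideal.Quotient.eq_zero_iff_mem).mpr hmem
    apply hx
    rw [Matrix.submatrix_map, ← RingHom.mapMatrix_apply, ← RingHom.map_det, this]

end Aux

section Master
variable {A : Type*} [CommRing A]

lemma one_submatrix_mul {p q r : ℕ} (M : Matrix (Fin p) (Fin q) A) (s : Fin r → Fin p) :
    ((1 : Matrix (Fin p) (Fin p) A).submatrix s id) * M = M.submatrix s id := by
  ext k j
  simp [Matrix.mul_apply, Matrix.one_apply]

lemma mul_one_submatrix {p q r : ℕ} (M : Matrix (Fin p) (Fin q) A) (t : Fin r → Fin q) :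
    M * ((1 : Matrix (Fin q) (Fin q) A).submatrix id t) = M.submatrix id t := by
  ext i k
  simp [Matrix.mul_apply, Matrix.one_apply]

lemma matrix_factor {p q r : ℕ} (M : Matrix (Fin p) (Fin q) A) (s : Fin r → Fin p)
    (t : Fin r → Fin q) (hU : IsUnit (M.submatrix s t).det)
    (hmin : ∀ (r' : Fin (r+1) → Fin p) (c' : Fin (r+1) → Fin q),
      (M.submatrix r' c').det = 0) :
    M = (M.submatrix id t) * (M.submatrix s t)⁻¹ * (M.submatrix s id) := by
  have hInv : Invertible (M.submatrix s t) := (M.submatrix s t).invertibleOfIsUnitDet hU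
  ext i j
  set B := M.submatrix s t with hB
  set v : Matrix (Fin r) (Fin 1) A := Matrix.of fun k _ => M (s k) j with hv
  set w : Matrix (Fin 1) (Fin r) A := Matrix.of fun _ k => M i (t k) with hw
  set d : Matrix (Fin 1) (Fin 1) A := Matrix.of fun _ _ => M i j with hd
  have hdet0 : (Matrix.fromBlocks B v w d).det = 0 := by
    have h1 : Matrix.fromBlocks B v w d
        = (M.submatrix ((Sum.elim s fun _ => i) ∘ finSumFinEquiv.symm)
            ((Sum.elim t fun _ => j) ∘ finSumFinEquiv.symm)).submatrix
            finSumFinEquiv finSumFinEquiv := by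
      rw [Matrix.submatrix_submatrix]
      ext (k | k) (k' | k') <;> simp [Matrix.fromBlocks, hB, hv, hw, hd]
    rw [h1, Matrix.det_submatrix_equiv_self]
    exact hmin _ _
  rw [Matrix.det_fromBlocks₁₁] at hdet0
  have h2 : (d - w * ⅟B * v).det = 0 := (IsUnit.mul_right_eq_zero hU).mp hdet0
  rw [Matrix.det_fin_one, Matrix.sub_apply, sub_eq_zero] at h2
  have h3 : M i j = (w * B⁻¹ * v) 0 0 := by
    rw [← Matrix.invOf_eq_nonsing_inv]
    exact h2
  rw [h3]
  simp [Matrix.mul_apply, hv, hw]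

end Master

section ModuleHelpers
variable {A : Type*} [CommRing A]

lemma inj_colsel {p q r : ℕ} (M : Matrix (Fin p) (Fin q) A) (s : Fin r → Fin p)
    (t : Fin r → Fin q) (hU : IsUnit (M.submatrix s t).det) :
    Function.Injective (M.submatrix id t).mulVecLin := by
  intro x y hxy
  have hB : ∀ z : Fin r → A,
      (M.submatrix s t).mulVec z = fun k => ((M.submatrix id t).mulVec z) (s k) := by
    intro z
    funext k
    simp [Matrix.mulVec, dotProduct]
  have h1 : (M.submatrix s t).mulVec x = (M.submatrix s t).mulVec y := by
    rw [hB, hB]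
    funext k
    rw [show (M.submatrix id t).mulVec x = (M.submatrix id t).mulVec y from hxy]
  calc x = ((M.submatrix s t)⁻¹ * (M.submatrix s t)).mulVec x := by
        rw [Matrix.nonsing_inv_mul _ hU, Matrix.one_mulVec]
    _ = (M.submatrix s t)⁻¹.mulVec ((M.submatrix s t).mulVec x) := (Matrix.mulVec_mulVec _ _ _).symm
    _ = (M.submatrix s t)⁻¹.mulVec ((M.submatrix s t).mulVec y) := by rw [h1]
    _ = ((M.submatrix s t)⁻¹ * (M.submatrix s t)).mulVec y := (Matrix.mulVec_mulVec _ _ _)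
    _ = y := by rw [Matrix.nonsing_inv_mul _ hU, Matrix.one_mulVec]

lemma range_factor {p q r : ℕ} (M : Matrix (Fin p) (Fin q) A) (s : Fin r → Fin p)
    (t : Fin r → Fin q)
    (hfac : M = (M.submatrix id t) * (M.submatrix s t)⁻¹ * (M.submatrix s id)) :
    LinearMap.range M.mulVecLin = LinearMap.range (M.submatrix id t).mulVecLin := by
  apply le_antisymm
  · conv_lhs => rw [hfac, Matrix.mul_assoc, Matrix.mulVecLin_mul]
    exact LinearMap.range_comp_le_range _ _
  · conv_lhs => rw [← mul_one_submatrix M t, Matrix.mulVecLin_mul]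
    exact LinearMap.range_comp_le_range _ _

lemma ker_factor {p q r : ℕ} (M : Matrix (Fin p) (Fin q) A) (s : Fin r → Fin p)
    (t : Fin r → Fin q)
    (hfac : M = (M.submatrix id t) * (M.submatrix s t)⁻¹ * (M.submatrix s id)) :
    LinearMap.ker M.mulVecLin = LinearMap.ker (M.submatrix s id).mulVecLin := by
  apply le_antisymm
  · conv_rhs => rw [← one_submatrix_mul M s, Matrix.mulVecLin_mul]
    exact LinearMap.ker_le_ker_comp _ _
  · conv_rhs => rw [hfac, Matrix.mulVecLin_mul]
    exact LinearMap.ker_le_ker_comp _ _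

end ModuleHelpers

section Helper
variable {A : Type*} [CommRing A]

lemma inj_of_left_inv {p q : ℕ} {M : Matrix (Fin p) (Fin q) A} {L : Matrix (Fin q) (Fin p) A}
    (h : L * M = 1) : Function.Injective M.mulVecLin := by
  intro x y hxy
  rw [Matrix.mulVecLin_apply, Matrix.mulVecLin_apply] at hxy
  have h2 : L.mulVec (M.mulVec x) = L.mulVec (M.mulVec y) := by rw [hxy]
  rwa [Matrix.mulVec_mulVec, Matrix.mulVec_mulVec, h, Matrix.one_mulVec,
    Matrix.one_mulVec] at h2

lemma coh_helper [IsLocalRing A] {l l1 l2 r m : ℕ}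
    (d1 : Matrix (Fin l) (Fin l1) A) (d2 : Matrix (Fin l2) (Fin l) A)
    (G1 : Matrix (Fin l) (Fin r) A) (C1 : Matrix (Fin r) (Fin l1) A)
    (D1 : Matrix (Fin l1) (Fin r) A) (L1 : Matrix (Fin r) (Fin l) A)
    (Hm : Matrix (Fin m) (Fin l) A) (Rm : Matrix (Fin l) (Fin m) A)
    (S2 : Matrix (Fin m) (Fin l2) A)
    (hd1 : d1 = G1 * C1) (hG1 : G1 = d1 * D1) (hL1 : L1 * G1 = 1)
    (hHm : Hm = S2 * d2) (hHR : Hm * Rm = 1)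
    (hkd2 : LinearMap.ker d2.mulVecLin = LinearMap.ker Hm.mulVecLin)
    (hcx : d2 * d1 = 0) :
    ∃ w : ℕ, l = r + w + m ∧ Nonempty (midCohomology d1 d2 ≃ₗ[A] (Fin w → A)) := by
  classical
  set P1 : Matrix (Fin l) (Fin l) A := G1 * L1 with hP1def
  have hP1d1 : P1 * d1 = d1 := by
    rw [hP1def, hd1, Matrix.mul_assoc G1 L1 (G1 * C1), ← Matrix.mul_assoc L1 G1 C1, hL1,
      Matrix.one_mul]
  have hP1P1 : P1 * P1 = P1 := by
    rw [hP1def, Matrix.mul_assoc G1 L1 (G1 * L1), ← Matrix.mul_assoc L1 G1 L1, hL1,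
      Matrix.one_mul]
  have hHmG1 : Hm * G1 = 0 := by
    rw [hHm, hG1, ← Matrix.mul_assoc (S2 * d2) d1 D1, Matrix.mul_assoc S2 d2 d1, hcx,
      Matrix.mul_zero, Matrix.zero_mul]
  have hHmP1 : Hm * P1 = 0 := by
    rw [hP1def, ← Matrix.mul_assoc Hm G1 L1, hHmG1, Matrix.zero_mul]
  have hrange1 : LinearMap.range d1.mulVecLin = LinearMap.range G1.mulVecLin := by
    apply le_antisymm
    · conv_lhs => rw [hd1, Matrix.mulVecLin_mul]
      exact LinearMap.range_comp_le_range _ _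
    · conv_lhs => rw [hG1, Matrix.mulVecLin_mul]
      exact LinearMap.range_comp_le_range _ _
  have hinj1 : Function.Injective G1.mulVecLin := inj_of_left_inv hL1
  have hinjR : Function.Injective Rm.mulVecLin := inj_of_left_inv hHR
  set K := LinearMap.ker d2.mulVecLin with hKdef
  have hNK : LinearMap.range d1.mulVecLin ≤ K := LinearMap.range_le_ker_iff.mpr
    (by rw [← Matrix.mulVecLin_mul, hcx, Matrix.mulVecLin_zero])
  have hmemK : ∀ x : Fin l → A, x ∈ K ↔ Hm.mulVec x = 0 := by
    intro x
    rw [hkd2, LinearMap.mem_ker, Matrix.mulVecLin_apply]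
  have hcompl2 : IsCompl K (LinearMap.range Rm.mulVecLin) := by
    constructor
    · rw [Submodule.disjoint_def]
      intro x hxK hxR
      obtain ⟨v, rfl⟩ := hxR
      rw [Matrix.mulVecLin_apply] at hxK ⊢
      have hv : v = 0 := by
        have h0 : Hm.mulVec (Rm.mulVec v) = 0 := (hmemK _).mp hxK
        rwa [Matrix.mulVec_mulVec, hHR, Matrix.one_mulVec] at h0
      rw [hv, Matrix.mulVec_zero]
    · rw [codisjoint_iff, eq_top_iff]
      rintro x -
      refine Submodule.mem_sup.mpr ⟨x - Rm.mulVec (Hm.mulVec x), ?_,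
        Rm.mulVec (Hm.mulVec x), ⟨Hm.mulVec x, rfl⟩, by abel⟩
      rw [hmemK, Matrix.mulVec_sub, Matrix.mulVec_mulVec, hHR, Matrix.one_mulVec, sub_self]
  set N'' := (LinearMap.range d1.mulVecLin).comap K.subtype with hNdef
  set Wl := K ⊓ LinearMap.ker P1.mulVecLin with hWldef
  set W'' := Wl.comap K.subtype with hWdef
  have hP1fix : ∀ x ∈ LinearMap.range d1.mulVecLin, P1.mulVec x = x := by
    rintro _ ⟨v, rfl⟩
    rw [Matrix.mulVecLin_apply, Matrix.mulVec_mulVec, hP1d1]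
  have hP1memrange : ∀ x : Fin l → A, P1.mulVec x ∈ LinearMap.range d1.mulVecLin := by
    intro x
    rw [hrange1]
    exact ⟨L1.mulVec x, by rw [Matrix.mulVecLin_apply, Matrix.mulVec_mulVec]⟩
  have hcomplK : IsCompl N'' W'' := by
    constructor
    · rw [Submodule.disjoint_def]
      intro x hxN hxW
      have h1 : (x : Fin l → A) ∈ LinearMap.range d1.mulVecLin := hxN
      have h2 : P1.mulVec (x : Fin l → A) = 0 := by
        have h3 := (Submodule.mem_inf.mp hxW).2
        rwa [LinearMap.mem_ker, Matrix.mulVecLin_apply] at h3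
      apply Subtype.ext
      rw [← hP1fix _ h1, h2]
      rfl
    · rw [codisjoint_iff, eq_top_iff]
      rintro x -
      have hy : P1.mulVec (x : Fin l → A) ∈ LinearMap.range d1.mulVecLin := hP1memrange _
      refine Submodule.mem_sup.mpr ⟨⟨P1.mulVec (x : Fin l → A), hNK hy⟩, hy,
        ⟨(x : Fin l → A) - P1.mulVec (x : Fin l → A), sub_mem x.2 (hNK hy)⟩, ?_, ?_⟩
      · refine Submodule.mem_inf.mpr ⟨sub_mem x.2 (hNK hy), ?_⟩
        rw [LinearMap.mem_ker]
        show P1.mulVecLin ((x : Fin l → A) - P1.mulVec (x : Fin l → A)) = 0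
        rw [map_sub, Matrix.mulVecLin_apply, Matrix.mulVecLin_apply,
          Matrix.mulVec_mulVec, hP1P1, sub_self]
      · apply Subtype.ext
        show P1.mulVec (x : Fin l → A) + ((x : Fin l → A) - P1.mulVec (x : Fin l → A))
          = (x : Fin l → A)
        abel
  set Pw : Matrix (Fin l) (Fin l) A := (1 - P1) * (1 - Rm * Hm) with hPwdef
  have hHmPw : Hm * Pw = 0 := by
    rw [hPwdef, ← Matrix.mul_assoc, Matrix.mul_sub Hm 1 P1, Matrix.mul_one, hHmP1, sub_zero,
      Matrix.mul_sub, Matrix.mul_one, ← Matrix.mul_assoc, hHR, Matrix.one_mul, sub_self]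
  have hP1Pw : P1 * Pw = 0 := by
    rw [hPwdef, ← Matrix.mul_assoc, Matrix.mul_sub P1 1 P1, Matrix.mul_one, hP1P1, sub_self,
      Matrix.zero_mul]
  have hPwmem : ∀ x : Fin l → A, Pw.mulVec x ∈ Wl := by
    intro x
    refine Submodule.mem_inf.mpr ⟨?_, ?_⟩
    · rw [hmemK, Matrix.mulVec_mulVec, hHmPw, Matrix.zero_mulVec]
    · rw [LinearMap.mem_ker, Matrix.mulVecLin_apply, Matrix.mulVec_mulVec, hP1Pw,
        Matrix.zero_mulVec]
  have hPwfix : ∀ x ∈ Wl, Pw.mulVec x = x := by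
    intro x hx
    obtain ⟨hx1, hx2⟩ := Submodule.mem_inf.mp hx
    have hHx : Hm.mulVec x = 0 := (hmemK x).mp hx1
    have hPx : P1.mulVec x = 0 := by
      rwa [LinearMap.mem_ker, Matrix.mulVecLin_apply] at hx2
    rw [hPwdef, ← Matrix.mulVec_mulVec x (1 - P1) (1 - Rm * Hm),
      Matrix.sub_mulVec 1 (Rm * Hm) x, Matrix.one_mulVec,
      ← Matrix.mulVec_mulVec x Rm Hm, hHx, Matrix.mulVec_zero, sub_zero,
      Matrix.sub_mulVec, Matrix.one_mulVec, hPx, sub_zero]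
  have hPwmem' : ∀ x : Fin l → A, Pw.mulVecLin x ∈ Wl := by
    intro x; rw [Matrix.mulVecLin_apply]; exact hPwmem x
  let ret : (Fin l → A) →ₗ[A] Wl := LinearMap.codRestrict Wl Pw.mulVecLin hPwmem'
  have hret : ∀ x : Wl, ret (x : Fin l → A) = x := by
    intro x
    apply Subtype.ext
    show Pw.mulVecLin (x : Fin l → A) = (x : Fin l → A)
    rw [Matrix.mulVecLin_apply]
    exact hPwfix _ x.2
  haveI : Module.Finite A Wl := Module.Finite.of_surjective ret
    (fun w => ⟨(w : Fin l → A), hret w⟩)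
  haveI : Module.Projective A Wl := Module.Projective.of_split Wl.subtype ret
    (LinearMap.ext fun x => hret x)
  haveI : Module.FinitePresentation A Wl := Module.finitePresentation_of_projective A Wl
  haveI : Module.Flat A Wl := Module.Flat.of_projective
  haveI : Module.Free A Wl := Module.free_of_flat_of_isLocalRing
  have eWW : W'' ≃ₗ[A] Wl := Submodule.comapSubtypeEquivOfLe inf_le_left
  have eW : W'' ≃ₗ[A] (Fin (Module.finrank A Wl) → A) :=
    eWW.trans (Module.finBasis A Wl).equivFun
  have eR : (LinearMap.range Rm.mulVecLin) ≃ₗ[A] (Fin m → A) :=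
    (LinearEquiv.ofInjective Rm.mulVecLin hinjR).symm
  have eN : N'' ≃ₗ[A] (Fin r → A) :=
    (Submodule.comapSubtypeEquivOfLe hNK).trans
      ((LinearEquiv.ofEq _ _ hrange1).trans (LinearEquiv.ofInjective G1.mulVecLin hinj1).symm)
  have eK : K ≃ₗ[A] ((Fin r → A) × (Fin (Module.finrank A Wl) → A)) :=
    (Submodule.prodEquivOfIsCompl N'' W'' hcomplK).symm.trans (eN.prodCongr eW)
  have eL : (Fin l → A) ≃ₗ[A]
      (((Fin r → A) × (Fin (Module.finrank A Wl) → A)) × (Fin m → A)) :=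
    (Submodule.prodEquivOfIsCompl K _ hcompl2).symm.trans (eK.prodCongr eR)
  have pe : ∀ (u v : ℕ), ((Fin u → A) × (Fin v → A)) ≃ₗ[A] (Fin (u + v) → A) := fun u v =>
    (LinearEquiv.sumArrowLequivProdArrow (Fin u) (Fin v) A A).symm.trans
      (LinearEquiv.funCongrLeft A A finSumFinEquiv.symm)
  have etot : (Fin l → A) ≃ₗ[A] (Fin (r + Module.finrank A Wl + m) → A) :=
    eL.trans (((pe r _).prodCongr (LinearEquiv.refl A _)).trans (pe _ m))
  refine ⟨Module.finrank A Wl, ?_, ?_⟩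
  · have hfr := LinearEquiv.finrank_eq etot
    simpa [Module.finrank_pi] using hfr
  · exact ⟨(Submodule.quotientEquivOfIsCompl N'' W'' hcomplK).trans eW⟩

end Helper

/-- Let `A` be an Artinian local ring with residue field `κ`,
`(d1, d2)` a complex of free `A`-modules with middle rank `l`, and `a, b ≥ 1`.
Assume `I_a(d1) = 0`, `I_b(d2) = 0`, `I_{a-1}(d1 ⊗ κ) ≠ 0` and `I_{b-1}(d2 ⊗ κ) ≠ 0`.
Then `im d1` and `im d2` are free `A`-modules of ranks `a-1` and `b-1` respectively,
and the middle cohomology `H^i` is a free `A`-module of rank `l - a - b + 2`. -/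
theorem images_and_cohomology_free
    {A : Type*} [CommRing A] [IsArtinianRing A] [IsLocalRing A]
    {l l1 l2 : ℕ} (d1 : Matrix (Fin l) (Fin l1) A) (d2 : Matrix (Fin l2) (Fin l) A)
    (hcx : d2 * d1 = 0) (a b : ℕ) (ha : 1 ≤ a) (hb : 1 ≤ b)
    (h1 : detIdeal d1 (a : ℤ) = ⊥)
    (h2 : detIdeal d2 (b : ℤ) = ⊥)
    (h1' : detIdeal (d1.map (IsLocalRing.residue A)) ((a : ℤ) - 1) ≠ ⊥)
    (h2' : detIdeal (d2.map (IsLocalRing.residue A)) ((b : ℤ) - 1) ≠ ⊥) :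
    Nonempty (LinearMap.range d1.mulVecLin ≃ₗ[A] (Fin (a - 1) → A)) ∧
    Nonempty (LinearMap.range d2.mulVecLin ≃ₗ[A] (Fin (b - 1) → A)) ∧
    Nonempty (midCohomology d1 d2 ≃ₗ[A] (Fin (l + 2 - a - b) → A)) := by
  obtain ⟨r, rfl⟩ : ∃ r, a = r + 1 := ⟨a - 1, by omega⟩
  obtain ⟨m, rfl⟩ : ∃ m, b = m + 1 := ⟨b - 1, by omega⟩
  obtain ⟨s1, t1, hs1, ht1, hU1⟩ := exists_unit_minor ha h1'
  obtain ⟨s2, t2, hs2, ht2, hU2⟩ := exists_unit_minor hb h2'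
  have hfac1 : d1 = (d1.submatrix id t1) * (d1.submatrix s1 t1)⁻¹ * (d1.submatrix s1 id) :=
    matrix_factor d1 s1 t1 hU1 (minors_eq_zero ha h1)
  have hfac2 : d2 = (d2.submatrix id t2) * (d2.submatrix s2 t2)⁻¹ * (d2.submatrix s2 id) :=
    matrix_factor d2 s2 t2 hU2 (minors_eq_zero hb h2)
  have hrange1 := range_factor d1 s1 t1 hfac1
  have hinj1 := inj_colsel d1 s1 t1 hU1
  have hrange2 := range_factor d2 s2 t2 hfac2
  have hinj2 := inj_colsel d2 s2 t2 hU2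
  refine ⟨⟨(LinearEquiv.ofEq _ _ hrange1).trans
      (LinearEquiv.ofInjective (d1.submatrix id t1).mulVecLin hinj1).symm⟩,
    ⟨(LinearEquiv.ofEq _ _ hrange2).trans
      (LinearEquiv.ofInjective (d2.submatrix id t2).mulVecLin hinj2).symm⟩, ?_⟩
  have hEG1 : ((1 : Matrix (Fin l) (Fin l) A).submatrix s1 id) * (d1.submatrix id t1)
      = d1.submatrix s1 t1 := by
    rw [one_submatrix_mul, Matrix.submatrix_submatrix]
    simp
  have hL1 : ((d1.submatrix s1 t1)⁻¹ * ((1 : Matrix (Fin l) (Fin l) A).submatrix s1 id))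
      * (d1.submatrix id t1) = 1 := by
    rw [Matrix.mul_assoc, hEG1, Matrix.nonsing_inv_mul _ hU1]
  have hHR : (d2.submatrix s2 id) * (((1 : Matrix (Fin l) (Fin l) A).submatrix id t2)
      * (d2.submatrix s2 t2)⁻¹) = 1 := by
    rw [← Matrix.mul_assoc, mul_one_submatrix, Matrix.submatrix_submatrix]
    simp [Matrix.mul_nonsing_inv _ hU2]
  obtain ⟨w, hw, ⟨e⟩⟩ := coh_helper d1 d2 (d1.submatrix id t1)
    ((d1.submatrix s1 t1)⁻¹ * (d1.submatrix s1 id))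
    ((1 : Matrix (Fin l1) (Fin l1) A).submatrix id t1)
    ((d1.submatrix s1 t1)⁻¹ * ((1 : Matrix (Fin l) (Fin l) A).submatrix s1 id))
    (d2.submatrix s2 id)
    (((1 : Matrix (Fin l) (Fin l) A).submatrix id t2) * (d2.submatrix s2 t2)⁻¹)
    ((1 : Matrix (Fin l2) (Fin l2) A).submatrix s2 id)
    (by rw [← Matrix.mul_assoc]; exact hfac1)
    (mul_one_submatrix d1 t1).symm
    hL1
    (one_submatrix_mul d2 s2).symm
    hHR
    (ker_factor d2 s2 t2 hfac2)
    hcx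
  exact ⟨e.trans (LinearEquiv.funCongrLeft A A
    (finCongr (show l + 2 - (r + 1) - (m + 1) = w by omega)))⟩
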